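/- Let R be the algebra of formal power series of bounded degree in variables φ_n (n ∈ ℤ), each of degree 1, and let φ = ∑_{n∈ℤ} φ_n ∈ R. Then for every N ≥ 0, the intersection of the principal ideal J = (φ - 1) with the N-th homogeneous component R_N is zero. -/

import Mathlib

open Classical in
/-- The element φ = ∑_{n∈ℤ} φₙ of the algebra R of formal power series in the
variables φₙ (n ∈ ℤ): the series whose coefficient is 1 on each degree-one
monomial φₙ and 0 elsewhere. -/
noncomputable def phiSeries : MvPowerSeries ℤ ℂ :=
  fun d => if ∃ n : ℤ, d = Finsupp.single n 1 then 1 else 0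

local notation "deg" d => Finsupp.sum d (fun _ k => k)

lemma sub_single_add (d : ℤ →₀ ℕ) (n : ℤ) (h : d n ≠ 0) :
    (d - Finsupp.single n 1) + Finsupp.single n 1 = d := by
  ext m
  rcases eq_or_ne m n with rfl | hm
  · simp [Finsupp.tsub_apply]; omega
  · simp [Finsupp.tsub_apply, Finsupp.single_apply, hm.symm]

lemma deg_single (n : ℤ) : (deg (Finsupp.single n 1)) = 1 :=
  Finsupp.sum_single_index rfl

lemma deg_sub_single (d : ℤ →₀ ℕ) (n : ℤ) (h : d n ≠ 0) :
    (deg (d - Finsupp.single n 1)) + 1 = deg d := by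
  conv_rhs => rw [← sub_single_add d n h]
  rw [Finsupp.sum_add_index' (fun _ => rfl) (fun _ _ _ => rfl), deg_single]

lemma coeff_phi_mul (f : MvPowerSeries ℤ ℂ) (d : ℤ →₀ ℕ) :
    MvPowerSeries.coeff d (phiSeries * f)
      = ∑ n ∈ d.support, MvPowerSeries.coeff (d - Finsupp.single n 1) f := by
  classical
  rw [MvPowerSeries.coeff_mul]
  have h1 : ∀ p ∈ Finset.HasAntidiagonal.antidiagonal d,
      MvPowerSeries.coeff p.1 phiSeries * MvPowerSeries.coeff p.2 f
        = if ∃ n : ℤ, p.1 = Finsupp.single n 1 then MvPowerSeries.coeff p.2 f else 0 := by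
    intro p _
    have : MvPowerSeries.coeff p.1 phiSeries
        = if ∃ n : ℤ, p.1 = Finsupp.single n 1 then (1:ℂ) else 0 := rfl
    rw [this]
    split <;> simp
  rw [Finset.sum_congr rfl h1, ← Finset.sum_filter]
  refine (Finset.sum_bij (fun n _ => (Finsupp.single n 1, d - Finsupp.single n 1)) ?_ ?_ ?_ ?_).symm
  · intro n hn
    rw [Finsupp.mem_support_iff] at hn
    simp only [Finset.mem_filter, Finset.HasAntidiagonal.mem_antidiagonal]
    refine ⟨?_, n, rfl⟩
    rw [add_comm]; exact sub_single_add d n hn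
  · intro a _ b _ h
    have := congrArg Prod.fst h
    simpa using (Finsupp.single_left_inj (one_ne_zero)).mp this
  · rintro p hp
    simp only [Finset.mem_filter, Finset.HasAntidiagonal.mem_antidiagonal] at hp
    obtain ⟨hadd, n, hn⟩ := hp
    have hd : d n ≠ 0 := by
      have := DFunLike.congr_fun hadd n
      simp [hn, Finsupp.single_apply] at this
      omega
    refine ⟨n, Finsupp.mem_support_iff.mpr hd, ?_⟩
    have hp2 : p.2 = d - Finsupp.single n 1 := by
      ext m
      have := DFunLike.congr_fun hadd m
      simp only [Finsupp.coe_add, Pi.add_apply, hn] at this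
      rw [Finsupp.tsub_apply]
      rw [Finsupp.single_apply] at this ⊢
      omega
    exact Prod.ext hn.symm hp2.symm
  · intro n hn
    rfl

lemma le_deg (d : ℤ →₀ ℕ) (n : ℤ) : d n ≤ deg d := by
  by_cases h : n ∈ d.support
  · exact Finset.single_le_sum (fun i _ => Nat.zero_le _) h
  · simp [Finsupp.notMem_support_iff.mp h]

lemma two_le_deg (d : ℤ →₀ ℕ) (m n : ℤ) (hmn : m ≠ n)
    (hm : m ∈ d.support) (hn : n ∈ d.support) : d m + d n ≤ deg d := by
  have hsub : ({m, n} : Finset ℤ) ⊆ d.support := by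
    intro x hx
    rcases Finset.mem_insert.mp hx with rfl | hx
    · exact hm
    · rw [Finset.mem_singleton] at hx; subst hx; exact hn
  calc d m + d n = ∑ i ∈ ({m, n} : Finset ℤ), d i := (Finset.sum_pair hmn).symm
    _ ≤ ∑ i ∈ d.support, d i := Finset.sum_le_sum_of_subset hsub
    _ = deg d := rfl

lemma key (f : (ℤ →₀ ℕ) → ℂ) (t : ℕ)
    (h : ∀ e : ℤ →₀ ℕ, (deg e) = t + 1 →
      ∑ n ∈ e.support, f (e - Finsupp.single n 1) = 0) :
    ∀ d : ℤ →₀ ℕ, (deg d) = t → f d = 0 := by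
  suffices H : ∀ k : ℕ, ∀ d : ℤ →₀ ℕ, ∀ M : ℤ, (deg d) = t →
      (∀ m ∈ d.support, m ≤ M) → t ≤ d M + k → f d = 0 by
    intro d hd
    obtain ⟨M, hM⟩ := Finset.exists_le d.support
    exact H t d M hd hM (by omega)
  intro k
  induction k with
  | zero =>
    intro d M hdeg hbound hle
    have hdM : d M = t := le_antisymm (hdeg ▸ le_deg d M) (by omega)
    set e := d + Finsupp.single M 1 with he
    have heapp : ∀ m, e m = d m + (if M = m then 1 else 0) := by
      intro m; simp [he, Finsupp.single_apply]
    have hdege : (deg e) = t + 1 := by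
      rw [he, Finsupp.sum_add_index' (fun _ => rfl) (fun _ _ _ => rfl), deg_single, hdeg]
    have hMe : M ∈ e.support := by
      rw [Finsupp.mem_support_iff, heapp]; simp
    have hsum := h e hdege
    rw [← Finset.add_sum_erase _ _ hMe] at hsum
    have hesub : e - Finsupp.single M 1 = d := by
      ext m; rw [Finsupp.tsub_apply, heapp, Finsupp.single_apply]; omega
    have hz : ∀ n ∈ e.support.erase M, f (e - Finsupp.single n 1) = 0 := by
      intro n hn
      exfalso
      obtain ⟨hnM, hne⟩ := Finset.mem_erase.mp hn
      have hnd : n ∈ d.support := by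
        rw [Finsupp.mem_support_iff] at hne ⊢
        rw [heapp] at hne
        simp [Ne.symm hnM] at hne
        exact hne
      have hdn : d n ≠ 0 := Finsupp.mem_support_iff.mp hnd
      have h1 := le_deg d n
      rw [hdeg] at h1
      have hMd : M ∈ d.support := by
        rw [Finsupp.mem_support_iff, hdM]
        omega
      have h3 := two_le_deg d M n (Ne.symm hnM) hMd hnd
      rw [hdeg] at h3
      omega
    rw [Finset.sum_eq_zero hz, hesub, add_zero] at hsum
    exact hsum
  | succ k ih =>
    intro d M hdeg hbound hle
    set e := d + Finsupp.single M 1 with he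
    have heapp : ∀ m, e m = d m + (if M = m then 1 else 0) := by
      intro m; simp [he, Finsupp.single_apply]
    have hdege : (deg e) = t + 1 := by
      rw [he, Finsupp.sum_add_index' (fun _ => rfl) (fun _ _ _ => rfl), deg_single, hdeg]
    have hMe : M ∈ e.support := by
      rw [Finsupp.mem_support_iff, heapp]; simp
    have hsum := h e hdege
    rw [← Finset.add_sum_erase _ _ hMe] at hsum
    have hesub : e - Finsupp.single M 1 = d := by
      ext m; rw [Finsupp.tsub_apply, heapp, Finsupp.single_apply]; omega
    have hz : ∀ n ∈ e.support.erase M, f (e - Finsupp.single n 1) = 0 := by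
      intro n hn
      obtain ⟨hnM, hne⟩ := Finset.mem_erase.mp hn
      have hnd : d n ≠ 0 := by
        rw [Finsupp.mem_support_iff, heapp] at hne
        simp [Ne.symm hnM] at hne
        exact hne
      have hen : e n ≠ 0 := by rw [heapp]; omega
      set d' := e - Finsupp.single n 1 with hd'
      have hd'app : ∀ m, d' m = e m - (if n = m then 1 else 0) := by
        intro m; rw [hd', Finsupp.tsub_apply, Finsupp.single_apply]
      have hdegd' : (deg d') = t := by
        have h4 := deg_sub_single e n hen
        rw [← hd'] at h4
        omega
      refine ih d' M hdegd' ?_ ?_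
      · intro m hm
        have hm' : d' m ≠ 0 := Finsupp.mem_support_iff.mp hm
        rw [hd'app] at hm'
        have hem : e m ≠ 0 := by omega
        rw [heapp] at hem
        rcases eq_or_ne M m with rfl | hMm
        · exact le_refl M
        · simp [hMm] at hem
          exact hbound m (Finsupp.mem_support_iff.mpr hem)
      · have : d' M = d M + 1 := by
          rw [hd'app, heapp, if_neg hnM, if_pos rfl]
          omega
        omega
    rw [Finset.sum_eq_zero hz, hesub, add_zero] at hsum
    exact hsum

/-- For every N ≥ 0, the intersection of the principal ideal J = (φ - 1)
with the N-th homogeneous component R_N of R (the algebra of formal power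
series of bounded degree in the φₙ) is zero: if ψ has bounded degree and
(φ-1)ψ is homogeneous of degree N, then (φ-1)ψ = 0. -/
theorem stmt_16 (N : ℕ) (ψ : MvPowerSeries ℤ ℂ)
    (hψ : ∃ D : ℕ, ∀ d : ℤ →₀ ℕ, D < d.sum (fun _ k => k) →
      MvPowerSeries.coeff d ψ = 0)
    (hhom : ∀ d : ℤ →₀ ℕ, d.sum (fun _ k => k) ≠ N →
      MvPowerSeries.coeff d ((phiSeries - 1) * ψ) = 0) :
    (phiSeries - 1) * ψ = 0 := by
  obtain ⟨D, hD⟩ := hψ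
  set F : (ℤ →₀ ℕ) → ℂ := fun d => MvPowerSeries.coeff d ψ with hF
  have hrel : ∀ d : ℤ →₀ ℕ, (deg d) ≠ N →
      (∑ n ∈ d.support, F (d - Finsupp.single n 1)) = F d := by
    intro d hd
    have h0 := hhom d hd
    rw [sub_mul, one_mul, map_sub, coeff_phi_mul] at h0
    exact sub_eq_zero.mp h0
  have hlow : ∀ m : ℕ, ∀ d : ℤ →₀ ℕ, (deg d) = m → m < N → F d = 0 := by
    intro m
    induction m using Nat.strong_induction_on with
    | _ m ih =>
      intro d hdm hmN
      rw [← hrel d (by omega)]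
      apply Finset.sum_eq_zero
      intro n hn
      have hs := deg_sub_single d n (Finsupp.mem_support_iff.mp hn)
      exact ih (deg (d - Finsupp.single n 1)) (by omega) _ rfl (by omega)
  have hhigh : ∀ j : ℕ, ∀ d : ℤ →₀ ℕ, N ≤ (deg d) → D + 1 ≤ (deg d) + j → F d = 0 := by
    intro j
    induction j with
    | zero => intro d _ h2; exact hD d (by omega)
    | succ j ih =>
      intro d hN hDle
      by_cases hc : D < (deg d)
      · exact hD d hc
      · refine key F (deg d) ?_ d rfl
        intro e hedeg
        rw [hrel e (by omega)]
        exact ih e (by omega) (by omega)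
  have hzero : ψ = 0 := by
    ext d
    rw [map_zero]
    rcases lt_or_ge (deg d) N with h | h
    · exact hlow _ d rfl h
    · exact hhigh (D + 1) d h (by omega)
  rw [hzero, mul_zero]
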